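/- arXiv:2411.04767 — 2 statements merged into one kernel-verified Lean document; each statement's English description precedes it below -/
import Mathlib

section
/- Multi-copy distinguishability, upper bound (paper's Lemma 2.1, right inequality, with the hypothesis needed for its validity): Let ρ₀, ρ₁ be density matrices on ℂ^d with ‖ρ₀ − ρ₁‖₁ ≤ 1, and let n ≥ 1 be a natural number. Then (1/2)·‖ρ₀^{⊗n} − ρ₁^{⊗n}‖₁ ≤ √(1 − (1 − ‖ρ₀ − ρ₁‖₁)^n). -/
open Matrix BigOperators
open scoped ComplexOrder

open Classical in
noncomputable def msqrt {n : Type*} [Fintype n] [DecidableEq n] (A : Matrix n n ℂ) :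
    Matrix n n ℂ :=
  if h : A.PosSemidef then
    h.1.eigenvectorUnitary.1 * diagonal ((↑) ∘ (√·) ∘ h.1.eigenvalues) *
      (star h.1.eigenvectorUnitary : Matrix n n ℂ)
  else 0

noncomputable def traceNorm {n : Type*} [Fintype n] [DecidableEq n] (A : Matrix n n ℂ) : ℝ :=
  (msqrt (Aᴴ * A)).trace.re

noncomputable def fidelity {n : Type*} [Fintype n] [DecidableEq n] (ρ₀ ρ₁ : Matrix n n ℂ) : ℝ :=
  ((msqrt (msqrt ρ₀ * ρ₁ * msqrt ρ₀)).trace.re) ^ 2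

noncomputable def tensorPow {d : ℕ} (ρ : Matrix (Fin d) (Fin d) ℂ) (n : ℕ) :
    Matrix (Fin n → Fin d) (Fin n → Fin d) ℂ :=
  Matrix.of fun i j => ∏ k, ρ (i k) (j k)

set_option linter.unusedSectionVars false

variable {m : Type*} [Fintype m] [DecidableEq m]

namespace Matrix.IsHermitian

variable {A : Matrix m m ℂ} (hA : A.IsHermitian)

lemma cfc_mul' (f g : ℝ → ℝ) :
    hA.cfc f * hA.cfc g = hA.cfc (fun x => f x * g x) := by
  simp only [Matrix.IsHermitian.cfc, Unitary.conjStarAlgAut_apply, Unitary.coe_star]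
  have h1 : (star (eigenvectorUnitary hA : Matrix m m ℂ)) *
      (eigenvectorUnitary hA : Matrix m m ℂ) = 1 :=
    Unitary.star_mul_self_of_mem (eigenvectorUnitary hA).2
  calc (eigenvectorUnitary hA : Matrix m m ℂ) * diagonal (Complex.ofReal ∘ f ∘ hA.eigenvalues)
        * star (eigenvectorUnitary hA : Matrix m m ℂ) *
        ((eigenvectorUnitary hA : Matrix m m ℂ) * diagonal (Complex.ofReal ∘ g ∘ hA.eigenvalues)
        * star (eigenvectorUnitary hA : Matrix m m ℂ))
      = (eigenvectorUnitary hA : Matrix m m ℂ) * (diagonal (Complex.ofReal ∘ f ∘ hA.eigenvalues)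
        * diagonal (Complex.ofReal ∘ g ∘ hA.eigenvalues))
        * star (eigenvectorUnitary hA : Matrix m m ℂ) := by
        rw [show ∀ a b c d e f : Matrix m m ℂ, a * b * c * (d * e * f) = a * (b * (c * d) * e) * f
          from fun a b c d e f => by simp only [mul_assoc], h1, mul_one]
    _ = _ := by
        rw [diagonal_mul_diagonal]
        congr 2
        simp [diagonal, Function.comp]

lemma diag_ofReal (f : ℝ → ℝ) :
    (diagonal (RCLike.ofReal ∘ f ∘ hA.eigenvalues) : Matrix m m ℂ)
      = diagonal (fun i => (f (hA.eigenvalues i) : ℂ)) := rfl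

lemma cfc_conjTranspose' (f : ℝ → ℝ) : (hA.cfc f)ᴴ = hA.cfc f := by
  have hd : star (diagonal (RCLike.ofReal ∘ f ∘ hA.eigenvalues) : Matrix m m ℂ)
      = diagonal (RCLike.ofReal ∘ f ∘ hA.eigenvalues) := by
    rw [star_eq_conjTranspose, diagonal_conjTranspose, diagonal_eq_diagonal_iff]
    intro i
    simp [Pi.star_def, Function.comp]
  rw [Matrix.IsHermitian.cfc, Unitary.conjStarAlgAut_apply, ← star_eq_conjTranspose, star_mul, star_mul, star_star, hd,
    mul_assoc]

lemma cfc_isHermitian' (f : ℝ → ℝ) : (hA.cfc f).IsHermitian := hA.cfc_conjTranspose' f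

lemma cfc_posSemidef' (f : ℝ → ℝ) (hf : ∀ i, 0 ≤ f (hA.eigenvalues i)) :
    (hA.cfc f).PosSemidef := by
  rw [Matrix.IsHermitian.cfc, Unitary.conjStarAlgAut_apply, star_eq_conjTranspose]
  have hd : (0 : m → ℂ) ≤ (RCLike.ofReal ∘ f ∘ hA.eigenvalues) := by
    intro i
    simpa using (RCLike.ofReal_nonneg (K := ℂ)).mpr (hf i)
  exact (Matrix.PosSemidef.diagonal hd).mul_mul_conjTranspose_same _

lemma cfc_trace' (f : ℝ → ℝ) :
    (hA.cfc f).trace = ∑ i, (f (hA.eigenvalues i) : ℂ) := by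
  rw [Matrix.IsHermitian.cfc, Unitary.conjStarAlgAut_apply, trace_mul_cycle,
    Unitary.star_mul_self_of_mem (eigenvectorUnitary hA).2, one_mul, trace_diagonal]
  simp

lemma cfc_mul_trace' (f : ℝ → ℝ) (C : Matrix m m ℂ) :
    (hA.cfc f * C).trace = ∑ i, (f (hA.eigenvalues i) : ℂ) *
      ((star (eigenvectorUnitary hA : Matrix m m ℂ)) * C *
        (eigenvectorUnitary hA : Matrix m m ℂ)) i i := by
  have key : ∀ U D sU C : Matrix m m ℂ, (U * D * sU * C).trace = (D * (sU * C * U)).trace := by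
    intro U D sU C
    rw [mul_assoc, trace_mul_comm, ← mul_assoc, trace_mul_comm, mul_assoc]
  rw [Matrix.IsHermitian.cfc, Unitary.conjStarAlgAut_apply, key, Matrix.trace]
  congr 1
  ext i
  rw [diag_apply, diagonal_mul]
  simp

lemma cfc_id' : hA.cfc (fun x => x) = A := by
  conv_rhs => rw [hA.spectral_theorem]
  rfl

lemma cfc_one' : hA.cfc (fun _ => 1) = 1 := by
  have h1 : ((RCLike.ofReal : ℝ → ℂ) ∘ (fun _ => (1:ℝ)) ∘ hA.eigenvalues) = fun _ => (1:ℂ) := by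
    ext i; simp
  rw [Matrix.IsHermitian.cfc, Unitary.conjStarAlgAut_apply, h1, diagonal_one, mul_one]
  exact Unitary.mul_star_self_of_mem (eigenvectorUnitary hA).2

lemma cfc_sub' (f g : ℝ → ℝ) : hA.cfc (fun x => f x - g x) = hA.cfc f - hA.cfc g := by
  have hd : (diagonal ((RCLike.ofReal : ℝ → ℂ) ∘ (fun x => f x - g x) ∘ hA.eigenvalues))
      = diagonal (RCLike.ofReal ∘ f ∘ hA.eigenvalues)
        - diagonal (RCLike.ofReal ∘ g ∘ hA.eigenvalues) := by
    rw [diagonal_sub, diagonal_eq_diagonal_iff]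
    intro i
    simp
  simp only [Matrix.IsHermitian.cfc, Unitary.conjStarAlgAut_apply, hd, sub_mul, mul_sub]

end Matrix.IsHermitian


lemma msqrt_of_posSemidef {A : Matrix m m ℂ} (hA : A.PosSemidef) : msqrt A = hA.1.cfc Real.sqrt := by
  rw [msqrt, dif_pos hA]
  rfl

lemma msqrt_posSemidef {A : Matrix m m ℂ} (hA : A.PosSemidef) : (msqrt A).PosSemidef := by
  rw [msqrt_of_posSemidef hA]; exact hA.1.cfc_posSemidef' _ (fun i => Real.sqrt_nonneg _)

lemma msqrt_mul_self {A : Matrix m m ℂ} (hA : A.PosSemidef) : msqrt A * msqrt A = A := by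
  rw [msqrt_of_posSemidef hA, hA.1.cfc_mul']
  conv_rhs => rw [← hA.1.cfc_id']
  have : (RCLike.ofReal ∘ (fun x => √x * √x) ∘ hA.1.eigenvalues : m → ℂ)
      = RCLike.ofReal ∘ (fun x => x) ∘ hA.1.eigenvalues := by
    funext i; simp [Real.mul_self_sqrt (hA.eigenvalues_nonneg i)]
  rw [Matrix.IsHermitian.cfc, Matrix.IsHermitian.cfc, this]

open scoped MatrixOrder in
lemma msqrt_eq_of_sq_eq {A B : Matrix m m ℂ} (hA : A.PosSemidef) (hB : B.PosSemidef)
    (h : B ^ 2 = A) : msqrt A = B := by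
  have e : msqrt A = CFC.sqrt A := by
    rw [CFC.sqrt_eq_cfc, cfc_nnreal_eq_real _ A hA.nonneg, hA.1.cfc_eq, msqrt_of_posSemidef hA]
    congr 1
    funext x
    rw [Real.sqrt]
  rw [e, ← h, CFC.sqrt_sq B hB.nonneg]

lemma Matrix.PosSemidef.diag_entry_nonneg {M : Matrix m m ℂ} (hM : M.PosSemidef) (i : m) :
    0 ≤ M i i := by
  exact hM.diag_nonneg

lemma Matrix.PosSemidef.trace_re_nonneg {M : Matrix m m ℂ} (hM : M.PosSemidef) :
    0 ≤ M.trace.re := by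
  rw [Matrix.trace, Complex.re_sum]
  exact Finset.sum_nonneg fun i _ =>
    (Complex.nonneg_iff.mp (hM.diag_entry_nonneg i)).1

lemma Matrix.PosSemidef.trace_eq_ofReal {M : Matrix m m ℂ} (hM : M.PosSemidef) :
    M.trace = (M.trace.re : ℂ) := by
  rw [Matrix.trace]
  rw [Complex.ext_iff]
  constructor
  · simp
  · simp only [Complex.ofReal_im, Complex.im_sum]
    exact Finset.sum_eq_zero fun i _ =>
      ((Complex.nonneg_iff.mp (hM.diag_entry_nonneg i)).2).symm

lemma trace_mul_psd_re_nonneg {P Q : Matrix m m ℂ} (hP : P.PosSemidef) (hQ : Q.PosSemidef) :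
    0 ≤ (P * Q).trace.re := by
  have h1 : P * Q = P * (msqrt Q * msqrt Q) := by rw [msqrt_mul_self hQ]
  have h2 : (P * (msqrt Q * msqrt Q)).trace = ((msqrt Q) * P * (msqrt Q)).trace := by
    rw [← mul_assoc, trace_mul_comm, ← mul_assoc]
  have h3 : ((msqrt Q)ᴴ * P * (msqrt Q)).PosSemidef := hP.conjTranspose_mul_mul_same _
  rw [(msqrt_posSemidef hQ).1] at h3
  rw [h1, h2]
  exact h3.trace_re_nonneg

lemma trace_mul_psd_eq_ofReal {P Q : Matrix m m ℂ} (hP : P.PosSemidef) (hQ : Q.PosSemidef) :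
    (P * Q).trace = ((P * Q).trace.re : ℂ) := by
  have h1 : P * Q = P * (msqrt Q * msqrt Q) := by rw [msqrt_mul_self hQ]
  have h2 : (P * (msqrt Q * msqrt Q)).trace = ((msqrt Q) * P * (msqrt Q)).trace := by
    rw [← mul_assoc, trace_mul_comm, ← mul_assoc]
  have h3 : ((msqrt Q)ᴴ * P * (msqrt Q)).PosSemidef := hP.conjTranspose_mul_mul_same _
  rw [(msqrt_posSemidef hQ).1] at h3
  rw [h1, h2]
  exact h3.trace_eq_ofReal

lemma msqrt_conjTranspose_mul_self_of_hermitian {A : Matrix m m ℂ} (hA : A.IsHermitian) :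
    msqrt (Aᴴ * A) = hA.cfc (fun x => |x|) := by
  have hS : (Aᴴ * A).PosSemidef := posSemidef_conjTranspose_mul_self A
  have habs : (hA.cfc (fun x => |x|)).PosSemidef :=
    hA.cfc_posSemidef' _ (fun i => abs_nonneg _)
  have hsq : (hA.cfc (fun x => |x|)) ^ 2 = Aᴴ * A := by
    rw [pow_two, hA.cfc_mul']
    have h1 : (fun x : ℝ => |x| * |x|) = fun x : ℝ => x * x := funext abs_mul_abs_self
    rw [h1, ← hA.cfc_mul' (fun x => x) (fun x => x), hA.cfc_id', hA.eq]
  exact msqrt_eq_of_sq_eq hS habs hsq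

lemma traceNorm_hermitian {A : Matrix m m ℂ} (hA : A.IsHermitian) :
    traceNorm A = ∑ i, |hA.eigenvalues i| := by
  rw [traceNorm, msqrt_conjTranspose_mul_self_of_hermitian hA, hA.cfc_trace']
  rw [Complex.re_sum]
  simp

lemma traceNorm_hermitian_nonneg {A : Matrix m m ℂ} (hA : A.IsHermitian) :
    0 ≤ traceNorm A := by
  rw [traceNorm_hermitian hA]
  exact Finset.sum_nonneg fun i _ => abs_nonneg _

/-- Cauchy-Schwarz for the Frobenius inner product. -/
lemma re_trace_conjTranspose_mul_le (A B : Matrix m m ℂ) :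
    ((Aᴴ * B).trace).re ≤ Real.sqrt ((Aᴴ * A).trace.re) * Real.sqrt ((Bᴴ * B).trace.re) := by
  have key : ∀ C D : Matrix m m ℂ,
      (Cᴴ * D).trace = ∑ p : m × m, (starRingEnd ℂ) (C p.1 p.2) * D p.1 p.2 := by
    intro C D
    calc (Cᴴ * D).trace = ∑ j, ∑ i, (starRingEnd ℂ) (C i j) * D i j := by
          simp [Matrix.trace, Matrix.mul_apply, Matrix.diag_apply, conjTranspose_apply]
      _ = _ := by rw [Fintype.sum_prod_type]; exact Finset.sum_comm ..
  have h2 : ∀ C : Matrix m m ℂ, ((Cᴴ * C).trace).re = ∑ p : m × m, ‖C p.1 p.2‖ ^ 2 := by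
    intro C
    rw [key, Complex.re_sum]
    refine Finset.sum_congr rfl fun p _ => ?_
    rw [← Complex.normSq_eq_conj_mul_self]
    simp [Complex.sq_norm]
  calc ((Aᴴ * B).trace).re ≤ ‖(Aᴴ * B).trace‖ := Complex.re_le_norm _
    _ ≤ ∑ p : m × m, ‖A p.1 p.2‖ * ‖B p.1 p.2‖ := by
        rw [key]
        refine (norm_sum_le _ _).trans_eq ?_
        congr 1
        ext p
        rw [norm_mul]
        simp
    _ ≤ Real.sqrt (∑ p : m × m, ‖A p.1 p.2‖ ^ 2) *
        Real.sqrt (∑ p : m × m, ‖B p.1 p.2‖ ^ 2) :=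
        Real.sum_mul_le_sqrt_mul_sqrt _ _ _
    _ = _ := by rw [h2, h2]


lemma tensorPow_mul {d : ℕ} (A B : Matrix (Fin d) (Fin d) ℂ) (n : ℕ) :
    tensorPow A n * tensorPow B n = tensorPow (A * B) n := by
  ext i j
  simp only [tensorPow, Matrix.mul_apply, Matrix.of_apply]
  rw [Finset.prod_univ_sum, Fintype.piFinset_univ]
  refine Finset.sum_congr rfl fun x _ => ?_
  rw [← Finset.prod_mul_distrib]

lemma tensorPow_conjTranspose {d : ℕ} (A : Matrix (Fin d) (Fin d) ℂ) (n : ℕ) :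
    (tensorPow A n)ᴴ = tensorPow Aᴴ n := by
  ext i j
  simp [tensorPow, conjTranspose_apply, map_prod]

lemma tensorPow_trace {d : ℕ} (A : Matrix (Fin d) (Fin d) ℂ) (n : ℕ) :
    (tensorPow A n).trace = A.trace ^ n := by
  have h : A.trace ^ n = ∏ _k : Fin n, A.trace := by
    rw [Finset.prod_const, Finset.card_univ, Fintype.card_fin]
  rw [h]
  simp only [Matrix.trace, Matrix.diag_apply]
  rw [Finset.prod_univ_sum, Fintype.piFinset_univ]
  rfl

open scoped MatrixOrder in
lemma tensorPow_posSemidef {d : ℕ} {A : Matrix (Fin d) (Fin d) ℂ} (hA : A.PosSemidef) (n : ℕ) :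
    (tensorPow A n).PosSemidef := by
  obtain ⟨B, hB⟩ : ∃ B : Matrix (Fin d) (Fin d) ℂ, A = Bᴴ * B :=
    CStarAlgebra.nonneg_iff_eq_star_mul_self.mp hA.nonneg
  rw [hB, ← tensorPow_mul, ← tensorPow_conjTranspose]
  exact posSemidef_conjTranspose_mul_self _

lemma msqrt_tensorPow {d : ℕ} {A : Matrix (Fin d) (Fin d) ℂ} (hA : A.PosSemidef) (n : ℕ) :
    msqrt (tensorPow A n) = tensorPow (msqrt A) n := by
  have h1 : (tensorPow (msqrt A) n).PosSemidef := tensorPow_posSemidef (msqrt_posSemidef hA) n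
  have h2 : (tensorPow (msqrt A) n) ^ 2 = tensorPow A n := by
    rw [pow_two, tensorPow_mul, msqrt_mul_self hA]
  have h3 : (tensorPow A n).PosSemidef := tensorPow_posSemidef hA n
  exact msqrt_eq_of_sq_eq h3 h1 h2

namespace Matrix.IsHermitian

variable {A : Matrix m m ℂ} (hA : A.IsHermitian)

lemma cfc_add' (f g : ℝ → ℝ) : hA.cfc (fun x => f x + g x) = hA.cfc f + hA.cfc g := by
  have hd : (diagonal ((RCLike.ofReal : ℝ → ℂ) ∘ (fun x => f x + g x) ∘ hA.eigenvalues))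
      = diagonal (RCLike.ofReal ∘ f ∘ hA.eigenvalues)
        + diagonal (RCLike.ofReal ∘ g ∘ hA.eigenvalues) := by
    rw [diagonal_add, diagonal_eq_diagonal_iff]
    intro i
    simp
  simp only [Matrix.IsHermitian.cfc, Unitary.conjStarAlgAut_apply, hd, add_mul, mul_add]

lemma cfc_diag_entries (C : Matrix m m ℂ) (hC : C.PosSemidef) (i : m) :
    0 ≤ ((star (eigenvectorUnitary hA : Matrix m m ℂ) * C *
      (eigenvectorUnitary hA : Matrix m m ℂ)) i i) := by
  have h : ((eigenvectorUnitary hA : Matrix m m ℂ)ᴴ * C *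
      (eigenvectorUnitary hA : Matrix m m ℂ)).PosSemidef := hC.conjTranspose_mul_mul_same _
  rw [← star_eq_conjTranspose] at h
  exact h.diag_entry_nonneg i

end Matrix.IsHermitian

/-- If `-1 ≤ W ≤ 1` then `Re tr (W Δ) ≤ ‖Δ‖₁` for Hermitian `Δ`. -/
lemma re_trace_mul_le_traceNorm {Δ W : Matrix m m ℂ} (hΔ : Δ.IsHermitian)
    (hW1 : (1 - W).PosSemidef) (hW2 : (1 + W).PosSemidef) :
    ((W * Δ).trace).re ≤ traceNorm Δ := by
  have hid : Δ = hΔ.cfc (fun x => x) := (hΔ.cfc_id').symm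
  rw [trace_mul_comm]
  conv_lhs => rw [hid]
  rw [hΔ.cfc_mul_trace' (fun x => x) W, Complex.re_sum]
  set U : Matrix m m ℂ := (Matrix.IsHermitian.eigenvectorUnitary hΔ : Matrix m m ℂ) with hU
  set M : Matrix m m ℂ := star U * W * U with hM
  have hUU : star U * U = 1 := Unitary.star_mul_self_of_mem (Matrix.IsHermitian.eigenvectorUnitary hΔ).2
  have hMle : ∀ i, (M i i).re ≤ 1 := by
    intro i
    have h := (hΔ.cfc_diag_entries (1 - W) hW1 i)
    have he : star U * (1 - W) * U = 1 - M := by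
      rw [hM, mul_sub, sub_mul, mul_one, hUU]
    rw [he] at h
    have := (Complex.nonneg_iff.mp h).1
    simp only [Matrix.sub_apply, Complex.sub_re, Matrix.one_apply_eq] at this
    simp only [Complex.one_re] at this
    linarith
  have hMge : ∀ i, -1 ≤ (M i i).re := by
    intro i
    have h := (hΔ.cfc_diag_entries (1 + W) hW2 i)
    have he : star U * (1 + W) * U = 1 + M := by
      rw [hM, mul_add, add_mul, mul_one, hUU]
    rw [he] at h
    have := (Complex.nonneg_iff.mp h).1
    simp only [Matrix.add_apply, Complex.add_re, Matrix.one_apply_eq] at this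
    simp only [Complex.one_re] at this
    linarith
  rw [traceNorm_hermitian hΔ]
  refine Finset.sum_le_sum fun i _ => ?_
  rw [Complex.re_ofReal_mul]
  calc hΔ.eigenvalues i * (M i i).re ≤ |hΔ.eigenvalues i * (M i i).re| := le_abs_self _
    _ = |hΔ.eigenvalues i| * |(M i i).re| := abs_mul _ _
    _ ≤ |hΔ.eigenvalues i| * 1 := by
        refine mul_le_mul_of_nonneg_left ?_ (abs_nonneg _)
        rw [abs_le]
        exact ⟨hMge i, hMle i⟩
    _ = _ := mul_one _

lemma powers_stormer {ρ σ : Matrix m m ℂ} (hρ : ρ.PosSemidef) (hσ : σ.PosSemidef)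
    (hρt : ρ.trace = 1) (hσt : σ.trace = 1) :
    1 - traceNorm (ρ - σ) / 2 ≤ ((msqrt ρ * msqrt σ).trace).re := by
  set A : Matrix m m ℂ := msqrt ρ with hA
  set B : Matrix m m ℂ := msqrt σ with hB
  have hApsd : A.PosSemidef := msqrt_posSemidef hρ
  have hBpsd : B.PosSemidef := msqrt_posSemidef hσ
  have hD : (A - B).IsHermitian := hApsd.1.sub hBpsd.1
  have hΔ : (ρ - σ).IsHermitian := hρ.1.sub hσ.1
  set sgn : ℝ → ℝ := fun x => if 0 ≤ x then 1 else -1 with hsgn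
  set W : Matrix m m ℂ := hD.cfc sgn with hW
  -- W is a contraction
  have hW1 : (1 - W).PosSemidef := by
    have : (1 : Matrix m m ℂ) - W = hD.cfc (fun x => 1 - sgn x) := by
      rw [hD.cfc_sub' (fun _ => 1) sgn, hD.cfc_one']
    rw [this]
    refine hD.cfc_posSemidef' _ fun i => ?_
    by_cases h : 0 ≤ hD.eigenvalues i <;> simp [hsgn, h] <;> norm_num
  have hW2 : (1 + W).PosSemidef := by
    have : (1 : Matrix m m ℂ) + W = hD.cfc (fun x => 1 + sgn x) := by
      rw [hD.cfc_add' (fun _ => 1) sgn, hD.cfc_one']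
    rw [this]
    refine hD.cfc_posSemidef' _ fun i => ?_
    by_cases h : 0 ≤ hD.eigenvalues i <;> simp [hsgn, h] <;> norm_num
  -- key algebraic identity : W * (ρ - σ) = |D| * A + |D| * B
  have habs1 : W * (A - B) = hD.cfc (fun x => |x|) := by
    conv_lhs => rw [show A - B = hD.cfc (fun x => x) from (hD.cfc_id').symm]
    rw [hW, hD.cfc_mul']
    have hf : (fun x : ℝ => sgn x * x) = fun x : ℝ => |x| := by
      funext x
      by_cases h : 0 ≤ x
      · simp [hsgn, if_pos h, abs_of_nonneg h]
      · simp only [hsgn, if_neg h]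
        rw [abs_of_neg (lt_of_not_ge h)]
        ring
    rw [hf]
  have habs2 : (A - B) * W = hD.cfc (fun x => |x|) := by
    conv_lhs => rw [show A - B = hD.cfc (fun x => x) from (hD.cfc_id').symm]
    rw [hW, hD.cfc_mul']
    have hf : (fun x : ℝ => x * sgn x) = fun x : ℝ => |x| := by
      funext x
      by_cases h : 0 ≤ x
      · simp [hsgn, if_pos h, abs_of_nonneg h]
      · simp only [hsgn, if_neg h]
        rw [abs_of_neg (lt_of_not_ge h)]
        ring
    rw [hf]
  have hsplit : ρ - σ = A * (A - B) + (A - B) * B := by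
    rw [show A * (A - B) + (A - B) * B = A * A - B * B by noncomm_ring]
    rw [msqrt_mul_self hρ, msqrt_mul_self hσ]
  have htr : (W * (ρ - σ)).trace = (hD.cfc (fun x => |x|) * (A + B)).trace := by
    rw [hsplit, mul_add, trace_add, mul_add, trace_add]
    congr 1
    · -- tr (W * (A * (A-B))) = tr (|D| * A)
      rw [← mul_assoc, trace_mul_comm, ← mul_assoc, habs2]
    · rw [← mul_assoc, habs1]
  -- lower bound : Re tr (|D| (A+B)) ≥ Re tr (D^2)
  set U : Matrix m m ℂ := (Matrix.IsHermitian.eigenvectorUnitary hD : Matrix m m ℂ) with hU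
  have hDD : ((A - B) * (A - B)).trace = ∑ i, ((hD.eigenvalues i : ℂ))^2 := by
    have : (A - B) * (A - B) = hD.cfc (fun x => x * x) := by
      conv_lhs => rw [show A - B = hD.cfc (fun x => x) from (hD.cfc_id').symm]
      rw [hD.cfc_mul']
    rw [this, hD.cfc_trace']
    congr 1
    funext i
    push_cast
    ring
  have hDiagD : star U * (A - B) * U = diagonal (RCLike.ofReal ∘ hD.eigenvalues) := by
    have hs : A - B = U * diagonal (RCLike.ofReal ∘ hD.eigenvalues) * star U := hD.spectral_theorem
    conv_lhs => rw [hs]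
    have hUU : star U * U = 1 :=
      Unitary.star_mul_self_of_mem (Matrix.IsHermitian.eigenvectorUnitary hD).2
    simp only [← mul_assoc, hUU, one_mul]
    rw [mul_assoc, hUU, mul_one]
  have key : ((W * (ρ - σ)).trace).re ≥ (((A - B) * (A - B)).trace).re := by
    rw [htr, hD.cfc_mul_trace' (fun x => |x|) (A + B), hDD]
    rw [Complex.re_sum, Complex.re_sum]
    have hMa := fun i => hD.cfc_diag_entries A hApsd i
    have hMb := fun i => hD.cfc_diag_entries B hBpsd i
    refine Finset.sum_le_sum fun i _ => ?_
    set a : ℝ := ((star U * A * U) i i).re with ha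
    set b : ℝ := ((star U * B * U) i i).re with hb
    have ha0 : 0 ≤ a := (Complex.nonneg_iff.mp (hMa i)).1
    have hb0 : 0 ≤ b := (Complex.nonneg_iff.mp (hMb i)).1
    have hdi : hD.eigenvalues i = a - b := by
      have : star U * (A - B) * U = star U * A * U - star U * B * U := by
        rw [mul_sub, sub_mul]
      rw [this] at hDiagD
      have hentry := congrArg (fun M : Matrix m m ℂ => M i i) hDiagD
      simp only [Matrix.sub_apply, diagonal_apply_eq, Function.comp_apply] at hentry
      have := congrArg Complex.re hentry
      simp only [Complex.sub_re] at this
      rw [ha, hb]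
      exact this.symm
    have habs : |hD.eigenvalues i| ≤ a + b := by
      rw [hdi, abs_sub_le_iff]; constructor <;> linarith
    have h1 : (((hD.eigenvalues i : ℂ))^2).re = (hD.eigenvalues i)^2 := by
      rw [← Complex.ofReal_pow, Complex.ofReal_re]
    rw [h1, Complex.re_ofReal_mul]
    have h2 : ((star U * (A + B) * U) i i).re = a + b := by
      have : star U * (A + B) * U = star U * A * U + star U * B * U := by
        rw [mul_add, add_mul]
      rw [this, Matrix.add_apply, Complex.add_re, ha, hb]
    rw [h2]
    nlinarith [habs, abs_nonneg (hD.eigenvalues i), sq_abs (hD.eigenvalues i)]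
  -- upper bound via trace norm
  have hup : ((W * (ρ - σ)).trace).re ≤ traceNorm (ρ - σ) :=
    re_trace_mul_le_traceNorm hΔ hW1 hW2
  -- compute tr(D^2) = 2 - 2 G
  have hG : (((A - B) * (A - B)).trace).re = 2 - 2 * ((A * B).trace).re := by
    have : (A - B) * (A - B) = A * A - A * B - B * A + B * B := by noncomm_ring
    rw [this, trace_add, trace_sub, trace_sub, msqrt_mul_self hρ, msqrt_mul_self hσ]
    rw [trace_mul_comm B A]
    rw [hρt, hσt]
    simp only [Complex.sub_re, Complex.add_re, Complex.one_re]
    ring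
  have := le_trans (hG ▸ key) hup
  linarith

lemma sqrt_add_sqrt_le {a b c d : ℝ} (ha : 0 ≤ a) (hb : 0 ≤ b) (hc : 0 ≤ c) (hd : 0 ≤ d) :
    Real.sqrt (a * b) + Real.sqrt (c * d) ≤ Real.sqrt ((a + c) * (b + d)) := by
  have key : (Real.sqrt (a * b) + Real.sqrt (c * d)) ^ 2 ≤ (a + c) * (b + d) := by
    rw [add_sq, Real.sq_sqrt (mul_nonneg ha hb), Real.sq_sqrt (mul_nonneg hc hd)]
    have h1 : Real.sqrt (a * b) * Real.sqrt (c * d) = Real.sqrt (a * d) * Real.sqrt (c * b) := by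
      rw [← Real.sqrt_mul (mul_nonneg ha hb), ← Real.sqrt_mul (mul_nonneg ha hd)]
      congr 1
      ring
    have h2 : Real.sqrt (a * d) * Real.sqrt (c * b) ≤ (a * d + c * b) / 2 := by
      nlinarith [sq_nonneg (Real.sqrt (a * d) - Real.sqrt (c * b)),
        Real.sq_sqrt (mul_nonneg ha hd), Real.sq_sqrt (mul_nonneg hc hb)]
    nlinarith
  calc Real.sqrt (a * b) + Real.sqrt (c * d)
      = Real.sqrt ((Real.sqrt (a * b) + Real.sqrt (c * d)) ^ 2) :=
        (Real.sqrt_sq (by positivity)).symm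
    _ ≤ _ := Real.sqrt_le_sqrt key

/-- Cauchy-Schwarz with a projection `E` : `Re tr(√τ₀ E √τ₁) ≤ √(tr E τ₀) √(tr E τ₁)`. -/
lemma re_trace_sandwich_le {τ₀ τ₁ E : Matrix m m ℂ} (h₀ : τ₀.PosSemidef) (h₁ : τ₁.PosSemidef)
    (hE : E.IsHermitian) (hE2 : E * E = E) :
    ((msqrt τ₀ * E * msqrt τ₁).trace).re ≤
      Real.sqrt ((E * τ₀).trace.re) * Real.sqrt ((E * τ₁).trace.re) := by
  set X : Matrix m m ℂ := E * msqrt τ₀ with hX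
  set Y : Matrix m m ℂ := E * msqrt τ₁ with hY
  have hXY : Xᴴ * Y = msqrt τ₀ * E * msqrt τ₁ := by
    rw [hX, hY, conjTranspose_mul, (msqrt_posSemidef h₀).1.eq, hE.eq]
    rw [show msqrt τ₀ * E * (E * msqrt τ₁) = msqrt τ₀ * (E * E) * msqrt τ₁ by
      simp only [mul_assoc], hE2]
  have hXX : (Xᴴ * X).trace = (E * τ₀).trace := by
    rw [hX, conjTranspose_mul, (msqrt_posSemidef h₀).1.eq, hE.eq]
    rw [show msqrt τ₀ * E * (E * msqrt τ₀) = msqrt τ₀ * (E * E) * msqrt τ₀ by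
      simp only [mul_assoc], hE2]
    rw [trace_mul_cycle, msqrt_mul_self h₀, trace_mul_comm]
  have hYY : (Yᴴ * Y).trace = (E * τ₁).trace := by
    rw [hY, conjTranspose_mul, (msqrt_posSemidef h₁).1.eq, hE.eq]
    rw [show msqrt τ₁ * E * (E * msqrt τ₁) = msqrt τ₁ * (E * E) * msqrt τ₁ by
      simp only [mul_assoc], hE2]
    rw [trace_mul_cycle, msqrt_mul_self h₁, trace_mul_comm]
  have := re_trace_conjTranspose_mul_le X Y
  rw [hXY, hXX, hYY] at this
  exact this

/-- Main workhorse : trace distance between density matrices is at most `√(1 - G²)`. -/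
lemma trace_dist_le_sqrt {τ₀ τ₁ : Matrix m m ℂ} (h₀ : τ₀.PosSemidef) (h₁ : τ₁.PosSemidef)
    (h₀t : τ₀.trace = 1) (h₁t : τ₁.trace = 1) :
    (1 / 2) * traceNorm (τ₀ - τ₁) ≤
      Real.sqrt (1 - ((msqrt τ₀ * msqrt τ₁).trace.re) ^ 2) := by
  have hΔ : (τ₀ - τ₁).IsHermitian := h₀.1.sub h₁.1
  set fp : ℝ → ℝ := fun x => if 0 < x then 1 else 0 with hfp
  set P : Matrix m m ℂ := hΔ.cfc fp with hP
  have hPidem : P * P = P := by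
    rw [hP, hΔ.cfc_mul']
    have hf : (fun x : ℝ => fp x * fp x) = fp := by
      funext x
      by_cases h : 0 < x <;> simp [hfp, h]
    rw [hf]
  have hPherm : P.IsHermitian := hΔ.cfc_isHermitian' fp
  have hPpsd : P.PosSemidef := hΔ.cfc_posSemidef' fp fun i => by positivity
  have hQherm : (1 - P).IsHermitian := by
    have : (1 : Matrix m m ℂ) - P = hΔ.cfc (fun x => 1 - fp x) := by
      rw [hΔ.cfc_sub' (fun _ => 1) fp, hΔ.cfc_one']
    rw [this]; exact hΔ.cfc_isHermitian' _
  have hQpsd : ((1 : Matrix m m ℂ) - P).PosSemidef := by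
    have : (1 : Matrix m m ℂ) - P = hΔ.cfc (fun x => 1 - fp x) := by
      rw [hΔ.cfc_sub' (fun _ => 1) fp, hΔ.cfc_one']
    rw [this]
    refine hΔ.cfc_posSemidef' _ fun i => ?_
    by_cases h : 0 < hΔ.eigenvalues i <;> simp [hfp, h]
  have hQidem : (1 - P) * (1 - P) = (1 - P) := by
    have h : (1 - P) * (1 - P) = 1 - P - P + P * P := by noncomm_ring
    rw [h, hPidem]
    abel
  -- trace of Δ is zero
  have htrΔ : (τ₀ - τ₁).trace = 0 := by rw [trace_sub, h₀t, h₁t, sub_self]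
  have hsum : ∑ i, hΔ.eigenvalues i = 0 := by
    have h1 : (τ₀ - τ₁).trace = ∑ i, (hΔ.eigenvalues i : ℂ) := by
      conv_lhs => rw [show τ₀ - τ₁ = hΔ.cfc (fun x => x) from (hΔ.cfc_id').symm]
      rw [hΔ.cfc_trace']
    rw [htrΔ] at h1
    have := congrArg Complex.re h1.symm
    rw [Complex.re_sum] at this
    simpa using this
  -- tr(P Δ) = T/2  where T = traceNorm Δ
  have hPΔ : ((P * (τ₀ - τ₁)).trace).re = traceNorm (τ₀ - τ₁) / 2 := by
    have h1 : P * (τ₀ - τ₁) = hΔ.cfc (fun x => fp x * x) := by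
      conv_lhs => rw [show τ₀ - τ₁ = hΔ.cfc (fun x => x) from (hΔ.cfc_id').symm]
      rw [hP, hΔ.cfc_mul']
    have h2 : ∀ x : ℝ, fp x * x = (|x| + x) / 2 := by
      intro x
      by_cases h : 0 < x
      · simp only [hfp, if_pos h, one_mul, abs_of_pos h]
        ring
      · simp only [hfp, if_neg h, zero_mul, abs_of_nonpos (le_of_not_gt h)]
        ring
    rw [h1, hΔ.cfc_trace', Complex.re_sum, traceNorm_hermitian hΔ]
    have h3 : ∀ i, ((fp (hΔ.eigenvalues i) * hΔ.eigenvalues i : ℝ) : ℂ).re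
        = (|hΔ.eigenvalues i| + hΔ.eigenvalues i) / 2 := by
      intro i
      rw [Complex.ofReal_re, h2]
    have h4 : ∑ i, ((fp (hΔ.eigenvalues i) * hΔ.eigenvalues i : ℝ) : ℂ).re
        = ∑ i, (|hΔ.eigenvalues i| + hΔ.eigenvalues i) / 2 :=
      Finset.sum_congr rfl fun i _ => h3 i
    rw [h4, ← Finset.sum_div, Finset.sum_add_distrib, hsum, add_zero]
  -- probabilities
  set p : ℝ := ((P * τ₀).trace).re with hp
  set q : ℝ := ((P * τ₁).trace).re with hq
  have hp0 : 0 ≤ p := trace_mul_psd_re_nonneg hPpsd h₀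
  have hq0 : 0 ≤ q := trace_mul_psd_re_nonneg hPpsd h₁
  have hp1 : p ≤ 1 := by
    have h1 : 0 ≤ (((1 - P) * τ₀).trace).re := trace_mul_psd_re_nonneg hQpsd h₀
    have h2 : ((1 - P) * τ₀).trace = τ₀.trace - (P * τ₀).trace := by
      rw [sub_mul, trace_sub, one_mul]
    rw [h2, h₀t] at h1
    simp only [Complex.sub_re, Complex.one_re] at h1
    linarith
  have hq1 : q ≤ 1 := by
    have h1 : 0 ≤ (((1 - P) * τ₁).trace).re := trace_mul_psd_re_nonneg hQpsd h₁
    have h2 : ((1 - P) * τ₁).trace = τ₁.trace - (P * τ₁).trace := by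
      rw [sub_mul, trace_sub, one_mul]
    rw [h2, h₁t] at h1
    simp only [Complex.sub_re, Complex.one_re] at h1
    linarith
  have hpq : p - q = traceNorm (τ₀ - τ₁) / 2 := by
    have : (P * (τ₀ - τ₁)).trace = (P * τ₀).trace - (P * τ₁).trace := by
      rw [mul_sub, trace_sub]
    rw [← hPΔ, this]
    simp [Complex.sub_re, hp, hq]
  -- G ≤ √(pq) + √((1-p)(1-q))
  set G : ℝ := ((msqrt τ₀ * msqrt τ₁).trace).re with hGdef
  have hGsplit : G = ((msqrt τ₀ * P * msqrt τ₁).trace).re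
      + ((msqrt τ₀ * (1 - P) * msqrt τ₁).trace).re := by
    have : msqrt τ₀ * msqrt τ₁ = msqrt τ₀ * P * msqrt τ₁ + msqrt τ₀ * (1 - P) * msqrt τ₁ := by
      rw [show msqrt τ₀ * P * msqrt τ₁ + msqrt τ₀ * (1 - P) * msqrt τ₁
        = msqrt τ₀ * (P + (1 - P)) * msqrt τ₁ by noncomm_ring]
      rw [show P + ((1 : Matrix m m ℂ) - P) = 1 by abel, mul_one]
    rw [hGdef, this, trace_add, Complex.add_re]
  have hbound1 : ((msqrt τ₀ * P * msqrt τ₁).trace).re ≤ Real.sqrt (p * q) := by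
    have := re_trace_sandwich_le h₀ h₁ hPherm hPidem
    rw [← hp, ← hq] at this
    refine this.trans ?_
    rw [Real.sqrt_mul hp0]
  have hbound2 : ((msqrt τ₀ * (1 - P) * msqrt τ₁).trace).re ≤
      Real.sqrt ((1 - p) * (1 - q)) := by
    have := re_trace_sandwich_le h₀ h₁ hQherm hQidem
    have e0 : (((1 - P) * τ₀).trace).re = 1 - p := by
      rw [sub_mul, trace_sub, one_mul, h₀t]
      simp [Complex.sub_re, hp]
    have e1 : (((1 - P) * τ₁).trace).re = 1 - q := by
      rw [sub_mul, trace_sub, one_mul, h₁t]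
      simp [Complex.sub_re, hq]
    rw [e0, e1] at this
    refine this.trans ?_
    rw [Real.sqrt_mul (by linarith)]
  -- classical step
  have hclass : G ≤ Real.sqrt (1 - (p - q) ^ 2) := by
    have h1 : G ≤ Real.sqrt (p * q) + Real.sqrt ((1 - p) * (1 - q)) := by
      rw [hGsplit]; exact add_le_add hbound1 hbound2
    have h2 := sqrt_add_sqrt_le hp0 hq0 (by linarith : (0:ℝ) ≤ 1 - q) (by linarith : (0:ℝ) ≤ 1 - p)
    have h3 : (1 - q) * (1 - p) = (1 - p) * (1 - q) := by ring
    have h4 : (p + (1 - q)) * (q + (1 - p)) = 1 - (p - q) ^ 2 := by ring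
    rw [h3, h4] at h2
    linarith
  -- conclude
  have hGnn : 0 ≤ G := trace_mul_psd_re_nonneg (msqrt_posSemidef h₀) (msqrt_posSemidef h₁)
  have hTnn : 0 ≤ traceNorm (τ₀ - τ₁) := traceNorm_hermitian_nonneg hΔ
  have h1 : 0 ≤ 1 - (p - q) ^ 2 := by nlinarith
  have hsq : G ^ 2 ≤ 1 - (p - q) ^ 2 := by
    nlinarith [Real.sq_sqrt h1, Real.sqrt_nonneg (1 - (p - q) ^ 2)]
  have h2 : (p - q) ^ 2 ≤ 1 - G ^ 2 := by nlinarith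
  calc (1 / 2) * traceNorm (τ₀ - τ₁) = p - q := by rw [hpq]; ring
    _ = Real.sqrt ((p - q) ^ 2) := (Real.sqrt_sq (by linarith : 0 ≤ p - q)).symm
    _ ≤ Real.sqrt (1 - G ^ 2) := Real.sqrt_le_sqrt h2

/-- Multi-copy distinguishability, upper bound (paper's form, with validity hypothesis). -/
theorem multi_copy_distinguishability_upper' {d : ℕ} (ρ₀ ρ₁ : Matrix (Fin d) (Fin d) ℂ)
    (hρ₀ : ρ₀.PosSemidef) (hρ₀t : ρ₀.trace = 1)
    (hρ₁ : ρ₁.PosSemidef) (hρ₁t : ρ₁.trace = 1)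
    (hd : traceNorm (ρ₀ - ρ₁) ≤ 1)
    (n : ℕ) (hn : 1 ≤ n) :
    (1 / 2) * traceNorm (tensorPow ρ₀ n - tensorPow ρ₁ n) ≤
      Real.sqrt (1 - (1 - traceNorm (ρ₀ - ρ₁)) ^ n) := by
  have hT₁nn : 0 ≤ traceNorm (ρ₀ - ρ₁) := traceNorm_hermitian_nonneg (hρ₀.1.sub hρ₁.1)
  have hτ₀ : (tensorPow ρ₀ n).PosSemidef := tensorPow_posSemidef hρ₀ n
  have hτ₁ : (tensorPow ρ₁ n).PosSemidef := tensorPow_posSemidef hρ₁ n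
  have hτ₀t : (tensorPow ρ₀ n).trace = 1 := by rw [tensorPow_trace, hρ₀t, one_pow]
  have hτ₁t : (tensorPow ρ₁ n).trace = 1 := by rw [tensorPow_trace, hρ₁t, one_pow]
  have main := trace_dist_le_sqrt hτ₀ hτ₁ hτ₀t hτ₁t
  set g : ℝ := ((msqrt ρ₀ * msqrt ρ₁).trace).re with hg
  have hgc : (msqrt ρ₀ * msqrt ρ₁).trace = (g : ℂ) :=
    trace_mul_psd_eq_ofReal (msqrt_posSemidef hρ₀) (msqrt_posSemidef hρ₁)
  have hGn : ((msqrt (tensorPow ρ₀ n) * msqrt (tensorPow ρ₁ n)).trace).re = g ^ n := by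
    rw [msqrt_tensorPow hρ₀ n, msqrt_tensorPow hρ₁ n, tensorPow_mul, tensorPow_trace, hgc,
      ← Complex.ofReal_pow, Complex.ofReal_re]
  rw [hGn] at main
  have hps : 1 - traceNorm (ρ₀ - ρ₁) / 2 ≤ g := powers_stormer hρ₀ hρ₁ hρ₀t hρ₁t
  have hgnn : 0 ≤ g := trace_mul_psd_re_nonneg (msqrt_posSemidef hρ₀) (msqrt_posSemidef hρ₁)
  have h1T : 0 ≤ 1 - traceNorm (ρ₀ - ρ₁) := by linarith
  have hg2 : 1 - traceNorm (ρ₀ - ρ₁) ≤ g ^ 2 := by nlinarith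
  have hpow : (1 - traceNorm (ρ₀ - ρ₁)) ^ n ≤ (g ^ 2) ^ n := pow_le_pow_left₀ h1T hg2 n
  refine main.trans (Real.sqrt_le_sqrt ?_)
  have he : (g ^ n) ^ 2 = (g ^ 2) ^ n := by ring
  rw [he]
  linarith
end

section
/- Existence of a state at a prescribed trace distance: Let d ≥ 2, let φ be a density matrix on ℂ^d, and let ε be a real number with 0 ≤ ε ≤ 1 − 1/d. Then there exists a density matrix ρ on ℂ^d with (1/2)·‖ρ − φ‖₁ = ε. -/
open Matrix BigOperators
open scoped ComplexOrder

section helpers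

variable {n : Type*} [Fintype n] [DecidableEq n]

lemma conj_psd (V : Matrix n n ℂ) (μ : n → ℝ) (hμ : ∀ i, 0 ≤ μ i) :
    (V * Matrix.diagonal (fun i => (μ i : ℂ)) * star V).PosSemidef := by
  have hD : (Matrix.diagonal (fun i => (μ i : ℂ))).PosSemidef := by
    rw [posSemidef_diagonal_iff]
    intro i
    exact_mod_cast hμ i
  simpa [star_eq_conjTranspose] using hD.mul_mul_conjTranspose_same V

lemma conj_trace (V : Matrix n n ℂ) (hV : star V * V = 1) (B : Matrix n n ℂ) :
    (V * B * star V).trace = B.trace := by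
  rw [Matrix.trace_mul_cycle, hV, one_mul]

lemma conjU_mul (V : Matrix n n ℂ) (hV : star V * V = 1) (B C : Matrix n n ℂ) :
    (V * B * star V) * (V * C * star V) = V * (B * C) * star V := by
  have : (V * B * star V) * (V * C * star V) = V * B * ((star V * V) * (C * star V)) := by
    simp only [mul_assoc]
  rw [this, hV, one_mul]
  simp only [mul_assoc]

lemma conj_herm_sq (V : Matrix n n ℂ) (hV : star V * V = 1) (μ : n → ℝ) :
    let A := V * Matrix.diagonal (fun i => (μ i : ℂ)) * star V
    Aᴴ * A = V * Matrix.diagonal (fun i => ((μ i ^ 2 : ℝ) : ℂ)) * star V := by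
  intro A
  have hAh : Aᴴ = A := by
    simp only [A, conjTranspose_mul, conjTranspose_conjTranspose, star_eq_conjTranspose,
      diagonal_conjTranspose]
    have : star (fun i => (μ i : ℂ)) = fun i => (μ i : ℂ) := by
      funext i; simp [Complex.conj_ofReal]
    rw [this, mul_assoc]
  rw [hAh]
  show (V * Matrix.diagonal _ * star V) * (V * Matrix.diagonal _ * star V) = _
  rw [conjU_mul V hV, diagonal_mul_diagonal]
  congr 2
  funext i
  push_cast
  ring

lemma traceNorm_conj_diag (V : Matrix n n ℂ) (hV : star V * V = 1) (μ : n → ℝ) :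
    traceNorm (V * Matrix.diagonal (fun i => (μ i : ℂ)) * star V) = ∑ i, |μ i| := by
  set A := V * Matrix.diagonal (fun i => (μ i : ℂ)) * star V with hA
  set S := V * Matrix.diagonal (fun i => ((|μ i| : ℝ) : ℂ)) * star V with hS
  have hSpsd : S.PosSemidef := conj_psd V _ (fun i => abs_nonneg _)
  have hsq : S ^ 2 = Aᴴ * A := by
    rw [conj_herm_sq V hV μ, pow_two, hS, conjU_mul V hV, diagonal_mul_diagonal]
    have hfun : (fun i => ((|μ i| : ℝ) : ℂ) * ((|μ i| : ℝ) : ℂ))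
        = fun i => ((μ i ^ 2 : ℝ) : ℂ) := by
      funext i
      rw [← Complex.ofReal_mul, ← abs_mul, abs_mul_self, ← pow_two]
    rw [hfun]
  have hpsd : (Aᴴ * A).PosSemidef := Matrix.posSemidef_conjTranspose_mul_self A
  have hSsqrt : S = msqrt (Aᴴ * A) := by
    open scoped MatrixOrder in
    have h1 : CFC.sqrt (Aᴴ * A) = S := CFC.sqrt_unique (by rw [← pow_two]; exact hsq) hSpsd.nonneg
    open scoped MatrixOrder in
    rw [← h1, CFC.sqrt_eq_cfc, cfc_nnreal_eq_real _ (Aᴴ * A) hpsd.nonneg, hpsd.1.cfc_eq, msqrt,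
      dif_pos hpsd]
    simp only [IsHermitian.cfc, Unitary.conjStarAlgAut_apply]
    congr 3
    funext i
    simp [Real.coe_toNNReal', hpsd.eigenvalues_nonneg]
  rw [traceNorm, ← hSsqrt, hS, conj_trace V hV, Matrix.trace_diagonal]
  simp

end helpers

/-- Existence of a state at a prescribed trace distance. -/
theorem exists_state_at_trace_distance {d : ℕ} (hd : 2 ≤ d)
    (φ : Matrix (Fin d) (Fin d) ℂ) (hφ : φ.PosSemidef) (hφt : φ.trace = 1)
    (ε : ℝ) (hε0 : 0 ≤ ε) (hε1 : ε ≤ 1 - 1 / d) :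
    ∃ ρ : Matrix (Fin d) (Fin d) ℂ,
      ρ.PosSemidef ∧ ρ.trace = 1 ∧ (1 / 2) * traceNorm (ρ - φ) = ε := by
  classical
  have h := hφ.1
  set V : Matrix (Fin d) (Fin d) ℂ := (h.eigenvectorUnitary : Matrix (Fin d) (Fin d) ℂ) with hVdef
  haveI : NeZero d := ⟨by omega⟩
  have hV : star V * V = 1 := by
    have := h.eigenvectorUnitary.2
    rw [Matrix.mem_unitaryGroup_iff'] at this
    exact this
  set lam := h.eigenvalues with hlam
  have hspec : φ = V * Matrix.diagonal (fun i => (lam i : ℂ)) * star V := by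
    have := h.spectral_theorem
    rw [Unitary.conjStarAlgAut_apply] at this
    exact this
  have hlamnn : ∀ i, 0 ≤ lam i := fun i => hφ.eigenvalues_nonneg i
  -- sum of eigenvalues is 1
  have hsum : ∑ i, lam i = 1 := by
    have h1 : φ.trace = ∑ i, (lam i : ℂ) := by
      rw [hspec, conj_trace V hV, Matrix.trace_diagonal]
    rw [hφt] at h1
    have : ((∑ i, lam i : ℝ) : ℂ) = ((1 : ℝ) : ℂ) := by push_cast; simpa using h1.symm
    exact_mod_cast this
  have hdpos : (0 : ℝ) < d := by positivity
  -- find an index with small eigenvalue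
  obtain ⟨i₀, hi₀⟩ : ∃ i₀, lam i₀ ≤ 1 / d := by
    by_contra hcon
    push_neg at hcon
    have : (1 : ℝ) < ∑ i : Fin d, lam i := by
      calc (1 : ℝ) = ∑ _i : Fin d, (1 / d : ℝ) := by
            simp [Finset.sum_const]
        _ < ∑ i, lam i := by
            apply Finset.sum_lt_sum_of_nonempty
            · exact Finset.univ_nonempty
            · intro i _; exact hcon i
    rw [hsum] at this; exact lt_irrefl _ this
  have hD0 : 0 < 1 - lam i₀ := by
    have : (1 : ℝ) / d < 1 := by
      rw [div_lt_one hdpos]; exact_mod_cast lt_of_lt_of_le one_lt_two hd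
    linarith
  set t := ε / (1 - lam i₀) with ht
  have ht0 : 0 ≤ t := div_nonneg hε0 hD0.le
  have ht1 : t ≤ 1 := by
    rw [div_le_one hD0]
    have : 1 - 1 / (d : ℝ) ≤ 1 - lam i₀ := by linarith
    linarith
  set c : Fin d → ℝ := fun i => (1 - t) * lam i + t * (if i = i₀ then 1 else 0) with hc
  have hcnn : ∀ i, 0 ≤ c i := by
    intro i
    have h1 := hlamnn i
    have h2 : (0:ℝ) ≤ (1 - t) * lam i := mul_nonneg (by linarith) h1
    simp only [hc]
    split <;> nlinarith
  refine ⟨V * Matrix.diagonal (fun i => (c i : ℂ)) * star V, conj_psd V c hcnn, ?_, ?_⟩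
  · rw [conj_trace V hV, Matrix.trace_diagonal]
    have hsc : ∑ i, c i = 1 := by
      have h2 : ∑ i : Fin d, (t * if i = i₀ then (1:ℝ) else 0) = t := by
        simp [Finset.mul_sum, Finset.sum_ite_eq']
      simp only [hc, Finset.sum_add_distrib, ← Finset.mul_sum, hsum, mul_one] at *
      linarith
    rw [← Complex.ofReal_sum, hsc, Complex.ofReal_one]
  · have hdiff : V * Matrix.diagonal (fun i => (c i : ℂ)) * star V - φ
        = V * Matrix.diagonal (fun i => ((c i - lam i : ℝ) : ℂ)) * star V := by
      rw [hspec]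
      rw [← sub_mul, ← mul_sub, Matrix.diagonal_sub]
      congr 2
      funext i
      push_cast
      ring
    rw [hdiff, traceNorm_conj_diag V hV]
    have hval : ∀ i, |c i - lam i| = t * (if i = i₀ then 1 - lam i₀ else lam i) := by
      intro i
      by_cases hii : i = i₀
      · rw [hii, if_pos rfl]
        have he : c i₀ - lam i₀ = t * (1 - lam i₀) := by
          simp [hc]; ring
        rw [he, abs_of_nonneg (mul_nonneg ht0 hD0.le)]
      · rw [if_neg hii]
        have he : c i - lam i = -(t * lam i) := by
          simp only [hc, if_neg hii]; ring
        rw [he, abs_neg, abs_of_nonneg (mul_nonneg ht0 (hlamnn i))]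
    simp only [hval, ← Finset.mul_sum]
    have hsplit : ∑ i : Fin d, (if i = i₀ then 1 - lam i₀ else lam i)
        = (1 - lam i₀) + ∑ i ∈ Finset.univ.erase i₀, lam i := by
      rw [← Finset.add_sum_erase _ _ (Finset.mem_univ i₀), if_pos rfl]
      congr 1
      apply Finset.sum_congr rfl
      intro i hi
      rw [if_neg (Finset.ne_of_mem_erase hi)]
    have herase : ∑ i ∈ Finset.univ.erase i₀, lam i = 1 - lam i₀ := by
      have := Finset.add_sum_erase Finset.univ lam (Finset.mem_univ i₀)
      rw [hsum] at this
      linarith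
    rw [hsplit, herase]
    have hne : (1 : ℝ) - lam i₀ ≠ 0 := ne_of_gt hD0
    have key : t * ((1 - lam i₀) + (1 - lam i₀)) = 2 * ε := by
      have : t * (1 - lam i₀) = ε := div_mul_cancel₀ ε hne
      nlinarith [this]
    rw [key]
    ring
end
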